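/- Let P > 0 and τ > 0, and consider the characteristic function χ₊(z) = z + 1 + P e^{−zτ} on the real line. Then χ₊ has exactly two distinct real zeros if and only if P τ e^{1+τ} < 1; moreover, in that case both zeros z₂ < z₁ are negative. -/

import Mathlib

open Real Filter Set

/-- `χ₊(z) = z + 1 + P e^{-zτ}` has exactly two distinct real zeros iff
`P τ e^{1+τ} < 1`, and in that case both zeros are negative. -/
theorem stmt_18 (P τ : ℝ) (hP : 0 < P) (hτ : 0 < τ) :
    ((∃ z₁ z₂ : ℝ, z₂ < z₁ ∧
        z₁ + 1 + P * Real.exp (-z₁*τ) = 0 ∧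
        z₂ + 1 + P * Real.exp (-z₂*τ) = 0 ∧
        (∀ z : ℝ, z + 1 + P * Real.exp (-z*τ) = 0 → z = z₁ ∨ z = z₂)) ↔
      P * τ * Real.exp (1 + τ) < 1) ∧
    (P * τ * Real.exp (1 + τ) < 1 →
      ∀ z : ℝ, z + 1 + P * Real.exp (-z*τ) = 0 → z < 0) := by
  have hPτ : 0 < P * τ := mul_pos hP hτ
  set f : ℝ → ℝ := fun z => z + 1 + P * Real.exp (-z*τ) with hf
  have hc : Continuous f := by fun_prop
  have hd : ∀ z : ℝ, HasDerivAt f (1 - P*τ*Real.exp (-z*τ)) z := by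
    intro z
    have h1 : HasDerivAt (fun z : ℝ => -z*τ) (-τ) z := by
      simpa using ((hasDerivAt_id z).neg.mul_const τ)
    have h2 : HasDerivAt (fun z : ℝ => Real.exp (-z*τ)) (Real.exp (-z*τ) * (-τ)) z := h1.exp
    have h3 := ((hasDerivAt_id z).add_const 1).add (h2.const_mul P)
    convert h3 using 1
    · rfl
    · rfl
    · rfl
    · ring
  set m : ℝ := Real.log (P*τ) / τ with hmdef
  have hmτ : m * τ = Real.log (P*τ) := by rw [hmdef]; exact div_mul_cancel₀ _ (ne_of_gt hτ)
  have hme : P * τ * Real.exp (-m*τ) = 1 := by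
    rw [show -m*τ = -(m*τ) by ring, hmτ, Real.exp_neg, Real.exp_log hPτ]
    exact mul_inv_cancel₀ (ne_of_gt hPτ)
  have hmono : StrictMonoOn f (Ici m) := by
    apply strictMonoOn_of_deriv_pos (convex_Ici m) hc.continuousOn
    intro z hz
    rw [interior_Ici] at hz
    rw [(hd z).deriv]
    have hlt : Real.exp (-z*τ) < Real.exp (-m*τ) := by
      apply Real.exp_lt_exp.2
      have : m < z := hz
      nlinarith
    nlinarith
  have hanti : StrictAntiOn f (Iic m) := by
    apply strictAntiOn_of_deriv_neg (convex_Iic m) hc.continuousOn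
    intro z hz
    rw [interior_Iic] at hz
    rw [(hd z).deriv]
    have hlt : Real.exp (-m*τ) < Real.exp (-z*τ) := by
      apply Real.exp_lt_exp.2
      have : z < m := hz
      nlinarith
    nlinarith
  have hfm : f m = m + 1 + 1/τ := by
    have h : P * Real.exp (-m*τ) = 1/τ := by
      rw [eq_div_iff (ne_of_gt hτ)]
      linear_combination hme
    show m + 1 + P * Real.exp (-m*τ) = m + 1 + 1/τ
    rw [h]
  have hprod : Real.exp (1+τ) * Real.exp (-(1+τ)) = 1 := by
    rw [← Real.exp_add, show (1+τ) + -(1+τ) = 0 by ring, Real.exp_zero]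
  have hiff : f m < 0 ↔ P * τ * Real.exp (1 + τ) < 1 := by
    rw [hfm]
    have key : m + 1 + 1/τ = (Real.log (P*τ) + τ + 1)/τ := by
      rw [← hmτ]
      field_simp
    rw [key, div_lt_iff₀ hτ, zero_mul]
    have h2 : Real.log (P*τ) < -(1+τ) ↔ P*τ < Real.exp (-(1+τ)) := Real.log_lt_iff_lt_exp hPτ
    constructor
    · intro h
      have := h2.1 (by linarith)
      nlinarith [Real.exp_pos (-(1+τ))]
    · intro h
      have : P*τ < Real.exp (-(1+τ)) := by
        nlinarith [Real.exp_pos (-(1+τ)), Real.exp_pos (1+τ)]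
      have := h2.2 this
      linarith
  constructor
  · constructor
    · -- forward: two zeros → condition
      rintro ⟨z₁, z₂, h12, h1, h2, -⟩
      apply hiff.1
      by_contra hge
      push_neg at hge
      have key : ∀ z : ℝ, f z = 0 → z = m := by
        intro z hz
        rcases lt_trichotomy z m with h | h | h
        · have := hanti (le_of_lt h : z ∈ Iic m) (le_refl m : m ∈ Iic m) h
          rw [hz] at this
          linarith
        · exact h
        · have := hmono (le_refl m : m ∈ Ici m) (le_of_lt h : z ∈ Ici m) h
          rw [hz] at this
          linarith
      have e1 : z₁ = m := key z₁ h1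
      have e2 : z₂ = m := key z₂ h2
      rw [e1, e2] at h12
      exact lt_irrefl m h12
    · -- backward: condition → two zeros
      intro hcond
      have hfm0 : f m < 0 := hiff.2 hcond
      have hm0 : m < 0 := by
        rw [hfm] at hfm0
        have : 0 < 1/τ := by positivity
        linarith
      have hf0 : 0 < f 0 := by
        show 0 < 0 + 1 + P * Real.exp (-0*τ)
        simp
        positivity
      -- zero z₁ in (m, 0)
      obtain ⟨z₁, hz₁mem, hz₁⟩ : ∃ z₁ ∈ Ioo m 0, f z₁ = 0 := by
        have := intermediate_value_Ioo (le_of_lt hm0) hc.continuousOn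
          (show (0:ℝ) ∈ Ioo (f m) (f 0) from ⟨hfm0, hf0⟩)
        obtain ⟨z, hz, hfz⟩ := this
        exact ⟨z, hz, hfz⟩
      -- find a < m with f a > 0
      set a : ℝ := min m (-(4/(P*τ^2))) with hadef
      have ha_le : a ≤ m := min_le_left _ _
      have ha_le2 : a ≤ -(4/(P*τ^2)) := min_le_right _ _
      have hPτ2 : 0 < P * τ^2 := by positivity
      have ha_neg : a ≤ 0 := by
        have : 0 < 4/(P*τ^2) := by positivity
        linarith
      have h4 : 4 ≤ P * τ^2 * (-a) := by
        have : 4/(P*τ^2) ≤ -a := by linarith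
        rw [div_le_iff₀ hPτ2] at this
        linarith [this]
      have hfa : 0 < f a := by
        have hx : 0 ≤ -a*τ := by nlinarith
        have e1 : -a*τ/2 + 1 ≤ Real.exp (-a*τ/2) := by
          have := Real.add_one_le_exp (-a*τ/2)
          linarith
        have e2 : Real.exp (-a*τ/2) * Real.exp (-a*τ/2) = Real.exp (-a*τ) := by
          rw [← Real.exp_add]; ring_nf
        have e3 : (-a*τ/2 + 1)^2 ≤ Real.exp (-a*τ) := by
          nlinarith [Real.exp_pos (-a*τ/2)]
        show 0 < a + 1 + P * Real.exp (-a*τ)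
        nlinarith [e3, h4, sq_nonneg (a*τ)]
      have ha_lt : a < m := lt_of_le_of_ne ha_le (by intro he; rw [he] at hfa; linarith)
      obtain ⟨z₂, hz₂mem, hz₂⟩ : ∃ z₂ ∈ Ioo a m, f z₂ = 0 := by
        have := intermediate_value_Ioo' (le_of_lt ha_lt) hc.continuousOn
          (show (0:ℝ) ∈ Ioo (f m) (f a) from ⟨hfm0, hfa⟩)
        obtain ⟨z, hz, hfz⟩ := this
        exact ⟨z, hz, hfz⟩
      refine ⟨z₁, z₂, lt_trans hz₂mem.2 hz₁mem.1, hz₁, hz₂, ?_⟩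
      intro z hz
      rcases le_or_gt z m with h | h
      · right
        have hzm : z < m := by
          rcases lt_or_eq_of_le h with h' | h'
          · exact h'
          · exfalso
            rw [h'] at hz
            have hzz : f m = 0 := hz
            linarith [hfm0, hzz]
        exact hanti.injOn (le_of_lt hzm : z ∈ Iic m) (le_of_lt hz₂mem.2 : z₂ ∈ Iic m)
          (by rw [show f z = 0 from hz, hz₂])
      · left
        exact hmono.injOn (le_of_lt h : z ∈ Ici m) (le_of_lt hz₁mem.1 : z₁ ∈ Ici m)
          (by rw [show f z = 0 from hz, hz₁])
  · -- negativity
    intro _ z hz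
    by_contra hge
    push_neg at hge
    have : 0 < z + 1 + P * Real.exp (-z*τ) := by
      nlinarith [Real.exp_pos (-z*τ)]
    linarith [this, hz.le]
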